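/- Let Δ = conv(v_1, …, v_{d+1}) ⊆ ℝ^d be a lattice simplex with affinely independent vertices v_1, …, v_{d+1} ∈ ℤ^d, and let ℓ : ℤ^d → ℤ be a linear form (a group homomorphism given by integer coefficients) with ℓ(v_i) > 0 for all i. Then ℓ(α) ≥ 0 for every α ∈ nΔ ∩ ℤ^d and every n ≥ 0, and there exists a polynomial N(q,t) in the two variables q and t with nonnegative integer coefficients such that, in the power series ring ℤ[q]⟦t⟧, ∏_{i=1}^{d+1} (1 − q^{ℓ(v_i)} t) · ∑_{n ≥ 0} ( ∑_{α ∈ nΔ ∩ ℤ^d} q^{ℓ(α)} ) t^n = N(q,t). In particular, the q-Ehrhart series of Δ with respect to ℓ is a rational function in t and q with denominator ∏_{i=1}^{d+1}(1 − q^{ℓ(v_i)} t). -/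

import Mathlib

open scoped Pointwise

namespace QEhrhartAux

variable {d : ℕ} (v : Fin (d + 1) → (Fin d → ℤ))

/-- vertices lifted to height 1 -/
def u (i : Fin (d + 1)) : Fin (d + 1) → ℤ := Fin.snoc (v i) 1

def uR (i : Fin (d + 1)) : Fin (d + 1) → ℝ := fun j => (u v i j : ℝ)

def vR (i : Fin (d + 1)) : Fin d → ℝ := fun j => (v i j : ℝ)

lemma uR_castSucc (i : Fin (d + 1)) (j : Fin d) : uR v i j.castSucc = vR v i j := by
  simp [uR, vR, u]

lemma uR_last (i : Fin (d + 1)) : uR v i (Fin.last d) = 1 := by simp [uR, u]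

lemma linIndep (hv : AffineIndependent ℝ (vR v)) : LinearIndependent ℝ (uR v) := by
  rw [Fintype.linearIndependent_iff]
  intro g hg i
  have hlast : ∑ i, g i = 0 := by
    have := congrFun hg (Fin.last d)
    simpa [Finset.sum_apply, uR_last] using this
  have hsum : ∑ i, g i • vR v i = 0 := by
    funext j
    have := congrFun hg (Fin.castSucc j)
    simpa [Finset.sum_apply, uR_castSucc] using this
  exact affineIndependent_iff.mp hv Finset.univ g hlast hsum i (Finset.mem_univ i)

noncomputable def B (hv : AffineIndependent ℝ (vR v)) :
    Module.Basis (Fin (d + 1)) ℝ (Fin (d + 1) → ℝ) :=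
  basisOfLinearIndependentOfCardEqFinrank (linIndep v hv) (by simp)

lemma B_apply (hv : AffineIndependent ℝ (vR v)) (i : Fin (d + 1)) : B v hv i = uR v i := by
  rw [B, coe_basisOfLinearIndependentOfCardEqFinrank]

/-- integer vector cast to ℝ -/
def iR (x : Fin (d + 1) → ℤ) : Fin (d + 1) → ℝ := fun j => (x j : ℝ)

noncomputable def rep (hv : AffineIndependent ℝ (vR v)) (x : Fin (d + 1) → ℤ)
    (i : Fin (d + 1)) : ℝ := (B v hv).repr (iR x) i

lemma sum_rep (hv : AffineIndependent ℝ (vR v)) (x : Fin (d + 1) → ℤ) :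
    ∑ i, rep v hv x i • uR v i = iR x := by
  conv_rhs => rw [← (B v hv).sum_repr (iR x)]
  simp only [rep, B_apply]

lemma rep_eq (hv : AffineIndependent ℝ (vR v)) (x : Fin (d + 1) → ℤ)
    (c : Fin (d + 1) → ℝ) (h : ∑ i, c i • uR v i = iR x) : rep v hv x = c := by
  have h2 : ∑ i, c i • B v hv i = iR x := by simpa only [B_apply] using h
  funext i
  rw [rep, ← h2]
  exact congrFun ((B v hv).repr_sum_self c) i

variable (ℓ : (Fin d → ℤ) →+ ℤ)

variable (ℓ : (Fin d → ℤ) →+ ℤ)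

/-- real extension of ℓ -/
noncomputable def lR (x : Fin d → ℝ) : ℝ := ∑ j, x j * (ℓ (Pi.single j 1) : ℝ)

lemma lR_int (α : Fin d → ℤ) : lR ℓ (fun j => (α j : ℝ)) = (ℓ α : ℝ) := by
  have : α = ∑ j, α j • Pi.single j (1 : ℤ) := by
    funext k
    simp [Finset.sum_apply, Pi.single_apply]
  conv_rhs => rw [this]
  rw [map_sum]
  push_cast [map_zsmul]
  simp [lR]

lemma lR_sum {ι : Type*} (s : Finset ι) (f : ι → (Fin d → ℝ)) :
    lR ℓ (∑ i ∈ s, f i) = ∑ i ∈ s, lR ℓ (f i) := by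
  simp only [lR, Finset.sum_apply, Finset.sum_mul]
  exact Finset.sum_comm

lemma lR_smul (c : ℝ) (x : Fin d → ℝ) : lR ℓ (c • x) = c * lR ℓ x := by
  simp [lR, Finset.mul_sum, mul_assoc]



lemma mem_hull_iff (y : Fin d → ℝ) :
    y ∈ convexHull ℝ (Set.range (vR v)) ↔
      ∃ μ : Fin (d + 1) → ℝ, (∀ i, 0 ≤ μ i) ∧ ∑ i, μ i = 1 ∧ ∑ i, μ i • vR v i = y := by
  rw [convexHull_range_eq_exists_affineCombination]
  constructor
  · rintro ⟨s, w, hw0, hw1, rfl⟩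
    refine ⟨fun i => if i ∈ s then w i else 0, fun i => ?_, ?_, ?_⟩
    · dsimp only; split <;> simp_all [hw0]
    · rw [Finset.sum_ite_mem, Finset.univ_inter, hw1]
    · rw [Finset.affineCombination_eq_linear_combination s (vR v) w hw1]
      rw [← Finset.sum_subset (Finset.subset_univ s)
        (fun i _ hi => by simp [hi])]
      exact Finset.sum_congr rfl fun i hi => by simp [hi]
  · rintro ⟨μ, h0, h1, rfl⟩
    exact ⟨Finset.univ, μ, fun i _ => h0 i, h1,
      Finset.affineCombination_eq_linear_combination _ _ _ h1⟩

lemma mem_dilate_iff (Δ : Set (Fin d → ℝ)) (hΔ : Δ = convexHull ℝ (Set.range (vR v)))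
    (n : ℕ) (x : Fin d → ℝ) :
    x ∈ (n : ℝ) • Δ ↔
      ∃ lam : Fin (d + 1) → ℝ, (∀ i, 0 ≤ lam i) ∧ ∑ i, lam i = (n : ℝ) ∧
        ∑ i, lam i • vR v i = x := by
  subst hΔ
  rcases Nat.eq_zero_or_pos n with hn | hn
  · subst hn
    have hne : (convexHull ℝ (Set.range (vR v))).Nonempty :=
      convexHull_nonempty_iff.2 (Set.range_nonempty _)
    rw [Nat.cast_zero, Set.zero_smul_set hne]
    constructor
    · rintro rfl
      exact ⟨0, fun i => le_refl 0, by simp, by simp⟩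
    · rintro ⟨lam, h0, h1, rfl⟩
      have : ∀ i ∈ Finset.univ, lam i = 0 :=
        (Finset.sum_eq_zero_iff_of_nonneg (fun i _ => h0 i)).1 h1
      rw [Set.mem_zero]
      refine Finset.sum_eq_zero fun i _ => ?_
      rw [this i (Finset.mem_univ i), zero_smul]
  · have hn' : (0 : ℝ) < n := by exact_mod_cast hn
    rw [Set.mem_smul_set]
    constructor
    · rintro ⟨y, hy, rfl⟩
      obtain ⟨μ, h0, h1, h2⟩ := (mem_hull_iff v y).1 hy
      refine ⟨fun i => (n : ℝ) * μ i, fun i => mul_nonneg hn'.le (h0 i), ?_, ?_⟩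
      · rw [← Finset.mul_sum, h1, mul_one]
      · rw [← h2, Finset.smul_sum]
        congr 1; funext i; rw [smul_smul]
    · rintro ⟨lam, h0, h1, rfl⟩
      refine ⟨∑ i, ((n : ℝ)⁻¹ * lam i) • vR v i, ?_, ?_⟩
      · refine (mem_hull_iff v _).2 ⟨fun i => (n : ℝ)⁻¹ * lam i,
          fun i => mul_nonneg (inv_nonneg.2 hn'.le) (h0 i), ?_, rfl⟩
        rw [← Finset.mul_sum, h1, inv_mul_cancel₀ hn'.ne']
      · rw [Finset.smul_sum]
        exact Finset.sum_congr rfl fun i _ => by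
          rw [smul_smul, mul_inv_cancel_left₀ hn'.ne']

def snocZ (α : Fin d → ℤ) (n : ℤ) : Fin (d + 1) → ℤ := Fin.snoc α n

lemma iR_snocZ (α : Fin d → ℤ) (n : ℤ) :
    iR (snocZ α n) = Fin.snoc (fun j => (α j : ℝ)) (n : ℝ) := by
  funext j
  refine Fin.lastCases ?_ (fun j => ?_) j <;> simp [iR, snocZ]

lemma mem_dilate_iff_rep (hv : AffineIndependent ℝ (vR v)) (Δ : Set (Fin d → ℝ))
    (hΔ : Δ = convexHull ℝ (Set.range (vR v))) (n : ℕ) (α : Fin d → ℤ) :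
    ((fun j => (α j : ℝ)) ∈ (n : ℝ) • Δ) ↔
      ∀ i, 0 ≤ rep v hv (snocZ α (n : ℤ)) i := by
  rw [mem_dilate_iff v Δ hΔ]
  constructor
  · rintro ⟨lam, h0, h1, h2⟩
    have : rep v hv (snocZ α (n : ℤ)) = lam := by
      apply rep_eq
      rw [iR_snocZ]
      funext j
      refine Fin.lastCases ?_ (fun j => ?_) j
      · simpa [Finset.sum_apply, uR_last] using h1
      · simpa [Finset.sum_apply, uR_castSucc] using congrFun h2 j
    rw [this]; exact h0
  · intro h0
    refine ⟨rep v hv (snocZ α (n : ℤ)), h0, ?_, ?_⟩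
    · have := congrFun (sum_rep v hv (snocZ α (n : ℤ))) (Fin.last d)
      rw [iR_snocZ] at this
      simpa [Finset.sum_apply, uR_last] using this
    · funext j
      have := congrFun (sum_rep v hv (snocZ α (n : ℤ))) (Fin.castSucc j)
      rw [iR_snocZ] at this
      simpa [Finset.sum_apply, uR_castSucc] using this

/-- the linear form on the cone level -/
def Lf (x : Fin (d + 1) → ℤ) : ℤ := ℓ (fun j => x j.castSucc)

lemma Lf_cast (hv : AffineIndependent ℝ (vR v)) (x : Fin (d + 1) → ℤ) :
    ((Lf ℓ x : ℤ) : ℝ) = ∑ i, rep v hv x i * (ℓ (v i) : ℝ) := by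
  have hα : (fun j => ((fun j => x j.castSucc) j : ℝ)) = ∑ i, rep v hv x i • vR v i := by
    funext j
    have := congrFun (sum_rep v hv x) (Fin.castSucc j)
    simpa [Finset.sum_apply, uR_castSucc, iR] using this.symm
  rw [Lf, ← lR_int ℓ, hα, lR_sum]
  refine Finset.sum_congr rfl fun i _ => ?_
  rw [lR_smul]
  congr 1
  exact lR_int ℓ (v i)

lemma ht_cast (hv : AffineIndependent ℝ (vR v)) (x : Fin (d + 1) → ℤ) :
    ((x (Fin.last d) : ℤ) : ℝ) = ∑ i, rep v hv x i := by
  have := congrFun (sum_rep v hv x) (Fin.last d)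
  simpa [Finset.sum_apply, uR_last, iR] using this.symm

lemma Lf_nonneg (hv : AffineIndependent ℝ (vR v)) (hℓ : ∀ i, 0 < ℓ (v i))
    (x : Fin (d + 1) → ℤ) (hx : ∀ i, 0 ≤ rep v hv x i) : 0 ≤ Lf ℓ x := by
  have : (0 : ℝ) ≤ ((Lf ℓ x : ℤ) : ℝ) := by
    rw [Lf_cast v ℓ hv x]
    exact Finset.sum_nonneg fun i _ =>
      mul_nonneg (hx i) (by exact_mod_cast (hℓ i).le)
  exact_mod_cast this

lemma ht_nonneg (hv : AffineIndependent ℝ (vR v)) (x : Fin (d + 1) → ℤ)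
    (hx : ∀ i, 0 ≤ rep v hv x i) : 0 ≤ x (Fin.last d) := by
  have : (0 : ℝ) ≤ ((x (Fin.last d) : ℤ) : ℝ) := by
    rw [ht_cast v hv x]
    exact Finset.sum_nonneg fun i _ => hx i
  exact_mod_cast this

lemma Lf_snocZ (α : Fin d → ℤ) (n : ℤ) : Lf ℓ (snocZ α n) = ℓ α := by
  unfold Lf snocZ
  congr 1
  funext j
  simp

lemma rep_add (hv : AffineIndependent ℝ (vR v)) (x y : Fin (d + 1) → ℤ) :
    rep v hv (x + y) = fun i => rep v hv x i + rep v hv y i := by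
  have : iR (x + y) = iR x + iR y := by funext j; simp [iR]
  funext i
  simp [rep, this]

def msum (m : Fin (d + 1) → ℕ) : Fin (d + 1) → ℤ := ∑ i, (m i : ℤ) • u v i

lemma rep_msum (hv : AffineIndependent ℝ (vR v)) (m : Fin (d + 1) → ℕ) :
    rep v hv (msum v m) = fun i => (m i : ℝ) := by
  apply rep_eq
  funext j
  simp only [Finset.sum_apply, Pi.smul_apply, smul_eq_mul, iR, msum, uR]
  push_cast
  rfl

lemma Lf_msum (m : Fin (d + 1) → ℕ) :
    Lf ℓ (msum v m) = ∑ i, (m i : ℤ) * ℓ (v i) := by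
  have : (fun j => msum v m j.castSucc) = ∑ i, (m i : ℤ) • v i := by
    funext j
    simp [msum, u, Finset.sum_apply]
  rw [Lf, this, map_sum]
  refine Finset.sum_congr rfl fun i _ => ?_
  rw [map_zsmul, smul_eq_mul]

lemma ht_msum (m : Fin (d + 1) → ℕ) :
    msum v m (Fin.last d) = ∑ i, (m i : ℤ) := by
  simp [msum, u, Finset.sum_apply]

/-- integer parts of the coordinates -/
noncomputable def mfun (hv : AffineIndependent ℝ (vR v)) (x : Fin (d + 1) → ℤ)
    (i : Fin (d + 1)) : ℕ := (⌊rep v hv x i⌋).toNat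

/-- residual point in the fundamental parallelepiped -/
noncomputable def wres (hv : AffineIndependent ℝ (vR v)) (x : Fin (d + 1) → ℤ) :
    Fin (d + 1) → ℤ := x - msum v (mfun v hv x)

lemma wres_add_msum (hv : AffineIndependent ℝ (vR v)) (x : Fin (d + 1) → ℤ) :
    wres v hv x + msum v (mfun v hv x) = x := by
  funext j; simp [wres]

lemma rep_wres (hv : AffineIndependent ℝ (vR v)) (x : Fin (d + 1) → ℤ)
    (hx : ∀ i, 0 ≤ rep v hv x i) (i : Fin (d + 1)) :
    rep v hv (wres v hv x) i = Int.fract (rep v hv x i) := by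
  have h1 : rep v hv x = fun i => rep v hv (wres v hv x) i + rep v hv (msum v (mfun v hv x)) i := by
    rw [← rep_add v hv, wres_add_msum]
  have h2 := congrFun h1 i
  simp only [rep_msum v hv] at h2
  have h3 : ((mfun v hv x i : ℕ) : ℝ) = (⌊rep v hv x i⌋ : ℝ) := by
    rw [mfun]
    norm_cast
    exact Int.toNat_of_nonneg (Int.le_floor.2 (by simpa using hx i))
  rw [Int.fract]
  linarith [h2, h3]

lemma res_cond_wres (hv : AffineIndependent ℝ (vR v)) (x : Fin (d + 1) → ℤ)
    (hx : ∀ i, 0 ≤ rep v hv x i) (i : Fin (d + 1)) :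
    0 ≤ rep v hv (wres v hv x) i ∧ rep v hv (wres v hv x) i < 1 := by
  rw [rep_wres v hv x hx i]
  exact ⟨Int.fract_nonneg _, Int.fract_lt_one _⟩

lemma mfun_add (hv : AffineIndependent ℝ (vR v)) (w : Fin (d + 1) → ℤ)
    (hw : ∀ i, 0 ≤ rep v hv w i ∧ rep v hv w i < 1) (m : Fin (d + 1) → ℕ) :
    mfun v hv (w + msum v m) = m := by
  funext i
  have h2 : rep v hv (w + msum v m) i = rep v hv w i + (m i : ℝ) := by
    rw [rep_add v hv, rep_msum v hv]
  rw [mfun, h2]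
  have : ⌊rep v hv w i + (m i : ℝ)⌋ = (m i : ℤ) := by
    rw [Int.floor_eq_iff]
    push_cast
    exact ⟨by linarith [(hw i).1], by linarith [(hw i).2]⟩
  rw [this, Int.toNat_natCast]

lemma wres_add (hv : AffineIndependent ℝ (vR v)) (w : Fin (d + 1) → ℤ)
    (hw : ∀ i, 0 ≤ rep v hv w i ∧ rep v hv w i < 1) (m : Fin (d + 1) → ℕ) :
    wres v hv (w + msum v m) = w := by
  rw [wres, mfun_add v hv w hw m]
  funext j; simp

lemma rep_cond_add (hv : AffineIndependent ℝ (vR v)) (w : Fin (d + 1) → ℤ)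
    (hw : ∀ i, 0 ≤ rep v hv w i ∧ rep v hv w i < 1) (m : Fin (d + 1) → ℕ)
    (i : Fin (d + 1)) : 0 ≤ rep v hv (w + msum v m) i := by
  rw [rep_add v hv, rep_msum v hv]
  have := (hw i).1
  positivity

/-- integer points with all coordinates in `[0, c]` form a finite set -/
lemma finite_slice (hv : AffineIndependent ℝ (vR v)) (c : ℕ) :
    {x : Fin (d + 1) → ℤ | ∀ i, 0 ≤ rep v hv x i ∧ rep v hv x i ≤ c}.Finite := by
  set M : Fin (d + 1) → ℤ := fun j => c * ∑ i, |u v i j| with hM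
  apply Set.Finite.subset (Set.finite_Icc (-M) M)
  intro x hx
  simp only [Set.mem_Icc, Pi.le_def, Pi.neg_apply]
  have key : ∀ j, |x j| ≤ M j := by
    intro j
    have : ((|x j| : ℤ) : ℝ) ≤ ((M j : ℤ) : ℝ) := by
      have hxj : ((x j : ℤ) : ℝ) = ∑ i, rep v hv x i * (u v i j : ℝ) := by
        have := congrFun (sum_rep v hv x) j
        simpa [Finset.sum_apply, iR, uR] using this.symm
      rw [Int.cast_abs, hxj, hM]
      push_cast
      refine (Finset.abs_sum_le_sum_abs _ _).trans ?_
      rw [Finset.mul_sum]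
      refine Finset.sum_le_sum fun i _ => ?_
      rw [abs_mul]
      have h1 : |rep v hv x i| ≤ (c : ℝ) := by
        rw [abs_of_nonneg (hx i).1]; exact (hx i).2
      exact mul_le_mul_of_nonneg_right h1 (abs_nonneg _) |>.trans
        (le_of_eq rfl)
    exact_mod_cast this
  constructor
  · intro j; have := key j; linarith [neg_abs_le (x j), (abs_le.mp (key j)).1]
  · intro j; exact (abs_le.mp (key j)).2

lemma Lf_add (x y : Fin (d + 1) → ℤ) : Lf ℓ (x + y) = Lf ℓ x + Lf ℓ y := by
  have : (fun j : Fin d => (x + y) j.castSucc)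
      = (fun j => x j.castSucc) + (fun j => y j.castSucc) := by
    funext j; simp
  rw [Lf, this, map_add]; rfl

lemma resSet_finite (hv : AffineIndependent ℝ (vR v)) :
    {w : Fin (d + 1) → ℤ | ∀ i, 0 ≤ rep v hv w i ∧ rep v hv w i < 1}.Finite :=
  (finite_slice v hv 1).subset (fun w hw i =>
    ⟨(hw i).1, by exact_mod_cast (hw i).2.le⟩)

noncomputable def WFin (hv : AffineIndependent ℝ (vR v)) : Finset (Fin (d + 1) → ℤ) :=
  (resSet_finite v hv).toFinset

lemma mem_WFin (hv : AffineIndependent ℝ (vR v)) (w : Fin (d + 1) → ℤ) :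
    w ∈ WFin v hv ↔ ∀ i, 0 ≤ rep v hv w i ∧ rep v hv w i < 1 :=
  Set.Finite.mem_toFinset _

lemma coneSet_finite (hv : AffineIndependent ℝ (vR v)) (n : ℕ) :
    {x : Fin (d + 1) → ℤ | (∀ i, 0 ≤ rep v hv x i) ∧ x (Fin.last d) = (n : ℤ)}.Finite := by
  refine (finite_slice v hv n).subset (fun x hx => ?_)
  intro i
  refine ⟨hx.1 i, ?_⟩
  have hsum : ∑ k, rep v hv x k = (n : ℝ) := by
    rw [← ht_cast v hv x, hx.2]; push_cast; ring
  calc rep v hv x i ≤ ∑ k, rep v hv x k :=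
        Finset.single_le_sum (fun k _ => hx.1 k) (Finset.mem_univ i)
    _ = (n : ℝ) := hsum

lemma snocZ_injective (n : ℤ) : Function.Injective (fun α : Fin d → ℤ => snocZ α n) := by
  intro α β h
  funext j
  have := congrFun h j.castSucc
  simpa [snocZ] using this

lemma Sset_finite (hv : AffineIndependent ℝ (vR v)) (Δ : Set (Fin d → ℝ))
    (hΔ : Δ = convexHull ℝ (Set.range (vR v))) (n : ℕ) :
    {α : Fin d → ℤ | (fun j => (α j : ℝ)) ∈ (n : ℝ) • Δ}.Finite := by
  have hsub : {α : Fin d → ℤ | (fun j => (α j : ℝ)) ∈ (n : ℝ) • Δ} ⊆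
      (fun α : Fin d → ℤ => snocZ α (n : ℤ)) ⁻¹'
        {x | (∀ i, 0 ≤ rep v hv x i) ∧ x (Fin.last d) = (n : ℤ)} := by
    intro α hα
    refine ⟨(mem_dilate_iff_rep v hv Δ hΔ n α).1 hα, ?_⟩
    simp [snocZ]
  exact (Set.Finite.preimage (Set.injOn_of_injective (snocZ_injective (n : ℤ)))
    (coneSet_finite v hv n)).subset hsub

noncomputable def SFin (hv : AffineIndependent ℝ (vR v)) (Δ : Set (Fin d → ℝ))
    (hΔ : Δ = convexHull ℝ (Set.range (vR v))) (n : ℕ) : Finset (Fin d → ℤ) :=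
  (Sset_finite v hv Δ hΔ n).toFinset

lemma mem_SFin (hv : AffineIndependent ℝ (vR v)) (Δ : Set (Fin d → ℝ))
    (hΔ : Δ = convexHull ℝ (Set.range (vR v))) (n : ℕ) (α : Fin d → ℤ) :
    α ∈ SFin v hv Δ hΔ n ↔ ∀ i, 0 ≤ rep v hv (snocZ α (n : ℤ)) i := by
  rw [SFin, Set.Finite.mem_toFinset, Set.mem_setOf_eq, mem_dilate_iff_rep v hv Δ hΔ]

lemma Lf_decomp (hv : AffineIndependent ℝ (vR v)) (x : Fin (d + 1) → ℤ) :
    Lf ℓ x = Lf ℓ (wres v hv x) + ∑ i, (mfun v hv x i : ℤ) * ℓ (v i) := by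
  conv_lhs => rw [← wres_add_msum v hv x]
  rw [Lf_add, Lf_msum]

lemma ht_decomp (hv : AffineIndependent ℝ (vR v)) (x : Fin (d + 1) → ℤ) :
    x (Fin.last d) = wres v hv x (Fin.last d) + ∑ i, (mfun v hv x i : ℤ) := by
  conv_lhs => rw [← wres_add_msum v hv x]
  rw [Pi.add_apply, ht_msum]

lemma ht_decomp' (hv : AffineIndependent ℝ (vR v)) (x : Fin (d + 1) → ℤ) (n : ℕ)
    (hx : ∀ i, 0 ≤ rep v hv x i) (hxn : x (Fin.last d) = (n : ℤ)) :
    (wres v hv x (Fin.last d)).toNat + ∑ i, mfun v hv x i = n := by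
  have hw := res_cond_wres v hv x hx
  have h1 : 0 ≤ wres v hv x (Fin.last d) :=
    ht_nonneg v hv _ (fun i => (hw i).1)
  have hd := ht_decomp v hv x
  have h2 : (((wres v hv x (Fin.last d)).toNat + ∑ i, mfun v hv x i : ℕ) : ℤ) = (n : ℤ) := by
    push_cast [Int.toNat_of_nonneg h1]
    omega
  exact_mod_cast h2

lemma Lf_decomp' (hv : AffineIndependent ℝ (vR v)) (hℓ : ∀ i, 0 < ℓ (v i))
    (x : Fin (d + 1) → ℤ) (hx : ∀ i, 0 ≤ rep v hv x i) :
    (Lf ℓ x).toNat = (Lf ℓ (wres v hv x)).toNat + ∑ i, (ℓ (v i)).toNat * mfun v hv x i := by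
  have hw := res_cond_wres v hv x hx
  have h1 : 0 ≤ Lf ℓ (wres v hv x) := Lf_nonneg v ℓ hv hℓ _ (fun i => (hw i).1)
  have h2 : 0 ≤ Lf ℓ x := Lf_nonneg v ℓ hv hℓ _ hx
  have h3 : (((Lf ℓ (wres v hv x)).toNat + ∑ i, (ℓ (v i)).toNat * mfun v hv x i : ℕ) : ℤ)
      = Lf ℓ x := by
    push_cast [Int.toNat_of_nonneg h1]
    rw [Lf_decomp v ℓ hv x]
    congr 1
    refine Finset.sum_congr rfl fun i _ => ?_
    rw [Int.toNat_of_nonneg (hℓ i).le]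
    ring
  omega

/-- THE key counting identity -/
lemma counting (hv : AffineIndependent ℝ (vR v)) (hℓ : ∀ i, 0 < ℓ (v i))
    (Δ : Set (Fin d → ℝ)) (hΔ : Δ = convexHull ℝ (Set.range (vR v))) (n : ℕ) :
    ∑ α ∈ SFin v hv Δ hΔ n, (Polynomial.X : Polynomial ℤ) ^ (ℓ α).toNat
    = ∑ p ∈ (Finset.filter (fun w => (w (Fin.last d)).toNat ≤ n) (WFin v hv)).sigma
          (fun w => Finset.finsuppAntidiag Finset.univ (n - (w (Fin.last d)).toNat)),
        Polynomial.X ^ ((Lf ℓ p.1).toNat + ∑ i, (ℓ (v i)).toNat * p.2 i) := by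
  refine Finset.sum_nbij'
    (fun α => ⟨wres v hv (snocZ α (n : ℤ)),
      Finsupp.equivFunOnFinite.symm (mfun v hv (snocZ α (n : ℤ)))⟩)
    (fun p => fun j => (p.1 + msum v (p.2 : Fin (d + 1) → ℕ)) j.castSucc)
    ?_ ?_ ?_ ?_ ?_
  · -- forward membership
    intro α hα
    rw [mem_SFin] at hα
    have hlast : snocZ α (n : ℤ) (Fin.last d) = (n : ℤ) := by simp [snocZ]
    have hht := ht_decomp' v hv _ n hα hlast
    rw [Finset.mem_sigma]
    dsimp only
    constructor
    · rw [Finset.mem_filter, mem_WFin]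
      exact ⟨fun i => res_cond_wres v hv _ hα i, by omega⟩
    · rw [Finset.mem_finsuppAntidiag]
      refine ⟨?_, Finset.subset_univ _⟩
      have hco : ⇑(Finsupp.equivFunOnFinite.symm (mfun v hv (snocZ α (n : ℤ))))
          = mfun v hv (snocZ α (n : ℤ)) := rfl
      rw [hco]
      show (∑ i, mfun v hv (snocZ α (n : ℤ)) i)
          = n - (wres v hv (snocZ α (n : ℤ)) (Fin.last d)).toNat
      omega
  · -- backward membership
    rintro ⟨w, l⟩ hp
    dsimp only
    rw [Finset.mem_sigma, Finset.mem_filter, mem_WFin] at hp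
    dsimp only at hp
    obtain ⟨⟨hw, hwn⟩, hl⟩ := hp
    rw [Finset.mem_finsuppAntidiag] at hl
    have hsum : ∑ i, ((l i : ℕ) : ℤ) = ((n - (w (Fin.last d)).toNat : ℕ) : ℤ) := by
      exact_mod_cast congrArg (Nat.cast : ℕ → ℤ) hl.1
    have h1 : 0 ≤ w (Fin.last d) := ht_nonneg v hv w (fun i => (hw i).1)
    have hcone : ∀ i, 0 ≤ rep v hv (w + msum v ⇑l) i := rep_cond_add v hv w hw _
    have hlast : (w + msum v ⇑l) (Fin.last d) = (n : ℤ) := by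
      rw [Pi.add_apply, ht_msum]
      omega
    have hsnoc : snocZ (fun j => (w + msum v ⇑l) j.castSucc) (n : ℤ) = w + msum v ⇑l := by
      funext j
      refine Fin.lastCases ?_ (fun j => ?_) j
      · rw [← hlast]; simp [snocZ]
      · simp [snocZ]
    rw [mem_SFin, hsnoc]
    exact hcone
  · -- left inverse
    intro α hα
    dsimp only
    rw [mem_SFin] at hα
    have hco : ⇑(Finsupp.equivFunOnFinite.symm (mfun v hv (snocZ α (n : ℤ))))
        = mfun v hv (snocZ α (n : ℤ)) := rfl
    rw [hco]
    funext j
    rw [wres_add_msum]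
    simp [snocZ]
  · -- right inverse
    rintro ⟨w, l⟩ hp
    dsimp only
    rw [Finset.mem_sigma, Finset.mem_filter, mem_WFin] at hp
    dsimp only at hp
    obtain ⟨⟨hw, hwn⟩, hl⟩ := hp
    rw [Finset.mem_finsuppAntidiag] at hl
    have hsum : ∑ i, ((l i : ℕ) : ℤ) = ((n - (w (Fin.last d)).toNat : ℕ) : ℤ) := by
      exact_mod_cast congrArg (Nat.cast : ℕ → ℤ) hl.1
    have h1 : 0 ≤ w (Fin.last d) := ht_nonneg v hv w (fun i => (hw i).1)
    have hlast : (w + msum v ⇑l) (Fin.last d) = (n : ℤ) := by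
      rw [Pi.add_apply, ht_msum]
      omega
    have hsnoc : snocZ (fun j => (w + msum v ⇑l) j.castSucc) (n : ℤ) = w + msum v ⇑l := by
      funext j
      refine Fin.lastCases ?_ (fun j => ?_) j
      · rw [← hlast]; simp [snocZ]
      · simp [snocZ]
    rw [hsnoc, wres_add v hv w hw, mfun_add v hv w hw,
      Finsupp.equivFunOnFinite_symm_coe]
  · -- values
    intro α hα
    dsimp only
    rw [mem_SFin] at hα
    have hkey := Lf_decomp' v ℓ hv hℓ (snocZ α (n : ℤ)) hα
    rw [Lf_snocZ] at hkey
    rw [hkey]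
    rfl

lemma geom_inv {R : Type*} [CommRing R] (c : R) :
    (1 - PowerSeries.C (R := R) c * PowerSeries.X) * PowerSeries.mk (fun k => c ^ k) = 1 := by
  ext n
  rw [sub_mul, one_mul, map_sub, mul_assoc]
  cases n with
  | zero => simp
  | succ n =>
    rw [PowerSeries.coeff_C_mul, PowerSeries.coeff_succ_X_mul]
    simp [pow_succ, mul_comm]

/-- the numerator polynomial -/
noncomputable def Npoly (hv : AffineIndependent ℝ (vR v)) : Polynomial (Polynomial ℤ) :=
  ∑ w ∈ WFin v hv, Polynomial.C (Polynomial.X ^ (Lf ℓ w).toNat) *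
    Polynomial.X ^ (w (Fin.last d)).toNat

lemma Npoly_coeff_nonneg (hv : AffineIndependent ℝ (vR v)) (i j : ℕ) :
    0 ≤ ((Npoly v ℓ hv).coeff i).coeff j := by
  simp only [Npoly, Polynomial.finset_sum_coeff]
  refine Finset.sum_nonneg fun w _ => ?_
  rw [Polynomial.C_mul_X_pow_eq_monomial, Polynomial.coeff_monomial]
  split
  · rw [Polynomial.coeff_X_pow]
    split <;> norm_num
  · simp

lemma Npoly_series (hv : AffineIndependent ℝ (vR v)) :
    PowerSeries.mk (fun n => (Npoly v ℓ hv).coeff n)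
      = ∑ w ∈ WFin v hv, PowerSeries.C (R := Polynomial ℤ) (Polynomial.X ^ (Lf ℓ w).toNat) *
          PowerSeries.X ^ (w (Fin.last d)).toNat := by
  refine PowerSeries.ext fun n => ?_
  rw [PowerSeries.coeff_mk, map_sum, Npoly, Polynomial.finset_sum_coeff]
  refine Finset.sum_congr rfl fun w _ => ?_
  rw [Polynomial.C_mul_X_pow_eq_monomial, Polynomial.coeff_monomial,
    PowerSeries.coeff_C_mul, PowerSeries.coeff_X_pow]
  split
  · split
    · rw [mul_one]
    · omega
  · split
    · omega
    · rw [mul_zero]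

lemma series_eq (hv : AffineIndependent ℝ (vR v)) (hℓ : ∀ i, 0 < ℓ (v i))
    (Δ : Set (Fin d → ℝ)) (hΔ : Δ = convexHull ℝ (Set.range (vR v))) :
    PowerSeries.mk (fun n =>
        ∑ α ∈ SFin v hv Δ hΔ n, (Polynomial.X : Polynomial ℤ) ^ (ℓ α).toNat)
    = ∑ w ∈ WFin v hv,
        PowerSeries.C (R := Polynomial ℤ) (Polynomial.X ^ (Lf ℓ w).toNat) *
          PowerSeries.X ^ (w (Fin.last d)).toNat *
          ∏ i, PowerSeries.mk (fun k => ((Polynomial.X : Polynomial ℤ) ^ (ℓ (v i)).toNat) ^ k) := by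
  refine PowerSeries.ext fun n => ?_
  rw [PowerSeries.coeff_mk, counting v ℓ hv hℓ Δ hΔ n, map_sum]
  rw [Finset.sum_sigma]
  dsimp only
  rw [Finset.sum_filter (fun w => (w (Fin.last d)).toNat ≤ n)
    (fun w => ∑ l ∈ Finset.finsuppAntidiag Finset.univ (n - (w (Fin.last d)).toNat),
      (Polynomial.X : Polynomial ℤ) ^ ((Lf ℓ w).toNat + ∑ i, (ℓ (v i)).toNat * l i))]
  refine Finset.sum_congr rfl fun w _ => ?_
  rw [mul_assoc, PowerSeries.coeff_C_mul, PowerSeries.coeff_X_pow_mul',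
    PowerSeries.coeff_prod]
  rw [mul_ite, mul_zero, Finset.mul_sum]
  split
  · refine Finset.sum_congr rfl fun l _ => ?_
    have : ∀ i, (PowerSeries.coeff (R := Polynomial ℤ) (l i))
        (PowerSeries.mk (fun k => ((Polynomial.X : Polynomial ℤ) ^ (ℓ (v i)).toNat) ^ k))
        = ((Polynomial.X : Polynomial ℤ) ^ (ℓ (v i)).toNat) ^ (l i) := fun i =>
      PowerSeries.coeff_mk _ _
    rw [Finset.prod_congr rfl (fun i _ => this i)]
    have h2 : ∀ i : Fin (d + 1), ((Polynomial.X : Polynomial ℤ) ^ (ℓ (v i)).toNat) ^ (l i)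
        = (Polynomial.X : Polynomial ℤ) ^ ((ℓ (v i)).toNat * l i) := fun i => by
      rw [← pow_mul]
    rw [Finset.prod_congr rfl (fun i _ => h2 i), Finset.prod_pow_eq_pow_sum, ← pow_add]
  · rfl

end QEhrhartAux

/-- Chapoton's rationality of the `q`-Ehrhart series of a lattice
simplex `Δ = conv(v₁,…,v_{d+1})` with respect to a linear form `ℓ` positive on
the vertices: `ℓ` is nonnegative on all lattice points of all dilates, and
`∏ᵢ (1 − q^{ℓ(vᵢ)} t) · ∑_{n≥0} (∑_{α ∈ nΔ ∩ ℤ^d} q^{ℓ(α)}) tⁿ` is a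
polynomial in `q` and `t` with nonnegative integer coefficients. -/
theorem q_Ehrhart_series_simplex_rationality
    {d : ℕ} (v : Fin (d + 1) → (Fin d → ℤ))
    (hv : AffineIndependent ℝ (fun i => (fun j => (v i j : ℝ))))
    (Δ : Set (Fin d → ℝ))
    (hΔ : Δ = convexHull ℝ (Set.range (fun i => (fun j => (v i j : ℝ)))))
    (ℓ : (Fin d → ℤ) →+ ℤ) (hℓ : ∀ i, 0 < ℓ (v i)) :
    (∀ (n : ℕ) (α : Fin d → ℤ), (fun j => (α j : ℝ)) ∈ (n : ℝ) • Δ → 0 ≤ ℓ α) ∧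
    ∃ N : Polynomial (Polynomial ℤ),
      (∀ i j, 0 ≤ (N.coeff i).coeff j) ∧
      (∏ i, (1 - PowerSeries.C (R := Polynomial ℤ)
            (Polynomial.X ^ (ℓ (v i)).toNat) * PowerSeries.X)) *
        PowerSeries.mk (fun n =>
          ∑ᶠ α ∈ {α : Fin d → ℤ | (fun j => (α j : ℝ)) ∈ (n : ℝ) • Δ},
            (Polynomial.X : Polynomial ℤ) ^ (ℓ α).toNat)
      = PowerSeries.mk (fun n => N.coeff n) := by
  open QEhrhartAux in
  have hv' : AffineIndependent ℝ (vR v) := hv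
  have hΔ' : Δ = convexHull ℝ (Set.range (vR v)) := hΔ
  constructor
  · intro n α hα
    have hc := (mem_dilate_iff_rep v hv' Δ hΔ' n α).1 hα
    have h2 := Lf_nonneg v ℓ hv' hℓ _ hc
    rwa [Lf_snocZ] at h2
  · refine ⟨Npoly v ℓ hv', Npoly_coeff_nonneg v ℓ hv', ?_⟩
    have hmk : PowerSeries.mk (fun n =>
          ∑ᶠ α ∈ {α : Fin d → ℤ | (fun j => (α j : ℝ)) ∈ (n : ℝ) • Δ},
            (Polynomial.X : Polynomial ℤ) ^ (ℓ α).toNat)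
        = PowerSeries.mk (fun n =>
            ∑ α ∈ SFin v hv' Δ hΔ' n, (Polynomial.X : Polynomial ℤ) ^ (ℓ α).toNat) := by
      have hfn : (fun n : ℕ =>
            ∑ᶠ α ∈ {α : Fin d → ℤ | (fun j => (α j : ℝ)) ∈ (n : ℝ) • Δ},
              (Polynomial.X : Polynomial ℤ) ^ (ℓ α).toNat)
          = (fun n : ℕ =>
            ∑ α ∈ SFin v hv' Δ hΔ' n, (Polynomial.X : Polynomial ℤ) ^ (ℓ α).toNat) :=
        funext fun n => finsum_mem_eq_finite_toFinset_sum _ (Sset_finite v hv' Δ hΔ' n)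
      rw [hfn]
    rw [hmk, series_eq v ℓ hv' hℓ Δ hΔ', Npoly_series v ℓ hv', Finset.mul_sum]
    refine Finset.sum_congr rfl fun w _ => ?_
    have key : ∀ i : Fin (d + 1),
        (1 - PowerSeries.C (R := Polynomial ℤ) (Polynomial.X ^ (ℓ (v i)).toNat) * PowerSeries.X) *
          PowerSeries.mk (fun k => ((Polynomial.X : Polynomial ℤ) ^ (ℓ (v i)).toNat) ^ k)
        = 1 := fun i => geom_inv _
    calc (∏ i, (1 - PowerSeries.C (R := Polynomial ℤ)
            (Polynomial.X ^ (ℓ (v i)).toNat) * PowerSeries.X)) *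
          (PowerSeries.C (R := Polynomial ℤ) (Polynomial.X ^ (Lf ℓ w).toNat) *
            PowerSeries.X ^ (w (Fin.last d)).toNat *
            ∏ i, PowerSeries.mk (fun k => ((Polynomial.X : Polynomial ℤ) ^ (ℓ (v i)).toNat) ^ k))
        = PowerSeries.C (R := Polynomial ℤ) (Polynomial.X ^ (Lf ℓ w).toNat) *
            PowerSeries.X ^ (w (Fin.last d)).toNat *
            ∏ i, ((1 - PowerSeries.C (R := Polynomial ℤ)
                (Polynomial.X ^ (ℓ (v i)).toNat) * PowerSeries.X) *
              PowerSeries.mk (fun k => ((Polynomial.X : Polynomial ℤ) ^ (ℓ (v i)).toNat) ^ k)) := by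
          rw [Finset.prod_mul_distrib]; ring
      _ = PowerSeries.C (R := Polynomial ℤ) (Polynomial.X ^ (Lf ℓ w).toNat) *
            PowerSeries.X ^ (w (Fin.last d)).toNat := by
          rw [Finset.prod_congr rfl fun i _ => key i, Finset.prod_const_one, mul_one]
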